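/- If ρ ∈ L^{6/5}(ℝ³), then the Coulomb self-energy D(ρ,ρ) = (1/2)∫∫ |ρ(x)||ρ(y)|/|x−y| dx dy is finite, and D(ρ,ρ) ≤ C‖ρ‖_{L^{6/5}}² for a universal constant C. -/

import Mathlib

open MeasureTheory Real Filter ENNReal

noncomputable section

abbrev E3 := EuclideanSpace ℝ (Fin 3)

section AuxHLS

open Metric Set

namespace HLSaux

def V : ℝ≥0∞ := volume (Metric.ball (0:E3) 1)

lemma V_lt_top : V < ⊤ := measure_ball_lt_top

lemma half_ofReal : ENNReal.ofReal (1/2) = 2⁻¹ := by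
  rw [one_div, ENNReal.ofReal_inv_of_pos (by norm_num)]
  norm_num

lemma vol_ball (y : E3) {r : ℝ} (hr : 0 ≤ r) :
    volume (Metric.ball y r) = ENNReal.ofReal (r ^ 3) * V := by
  rw [Measure.addHaar_ball volume y hr]
  simp [finrank_euclideanSpace_fin, V]

lemma ball_integral (y : E3) {r : ℝ} (hr : 0 ≤ r) :
    ∫⁻ x in Metric.ball y r, (ENNReal.ofReal ‖x - y‖)⁻¹ ≤ ENNReal.ofReal (r^2) * (4 * V) := by
  rcases hr.eq_or_lt with rfl | hr
  · simp
  set shell : ℕ → Set E3 := fun k => Metric.ball y (r/2^k) \ Metric.ball y (r/2^(k+1)) with hshell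
  have cover : Metric.ball y r ⊆ {y} ∪ ⋃ k, shell k := by
    intro x hx
    by_cases hxy : x = y
    · exact Or.inl (by simp [hxy])
    right
    have hd : 0 < dist x y := dist_pos.2 hxy
    have hdr : dist x y < r := mem_ball.1 hx
    have hP : ∃ n : ℕ, r / 2 ^ n ≤ dist x y := by
      obtain ⟨n, hn⟩ := exists_pow_lt_of_lt_one (div_pos hd hr) (by norm_num : (1:ℝ)/2 < 1)
      refine ⟨n, ?_⟩
      calc r / 2 ^ n = r * (1/2)^n := by rw [div_pow, one_pow]; ring
        _ ≤ r * (dist x y / r) := mul_le_mul_of_nonneg_left hn.le hr.le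
        _ = dist x y := by field_simp
    obtain ⟨k, hk⟩ : ∃ k, Nat.find hP = k + 1 := by
      have hn0 : Nat.find hP ≠ 0 := by
        intro h
        have := Nat.find_spec hP
        rw [h] at this
        simp at this
        linarith
      exact ⟨Nat.find hP - 1, (Nat.succ_pred_eq_of_ne_zero hn0).symm⟩
    have h1 : r / 2 ^ (k+1) ≤ dist x y := hk ▸ Nat.find_spec hP
    have h2 : ¬ r / 2 ^ k ≤ dist x y := Nat.find_min hP (by omega)
    refine mem_iUnion.2 ⟨k, mem_ball.2 (by push_neg at h2; exact h2), ?_⟩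
    simp only [mem_ball, not_lt]
    exact h1
  have key : ∀ a b : ℝ, 0 < a →
      (ENNReal.ofReal a)⁻¹ * (ENNReal.ofReal b * V) = ENNReal.ofReal (b / a) * V := by
    intro a b ha
    rw [ENNReal.ofReal_div_of_pos ha, div_eq_mul_inv]
    ring
  have shell_bound : ∀ k : ℕ, ∫⁻ x in shell k, (ENNReal.ofReal ‖x - y‖)⁻¹
      ≤ ENNReal.ofReal (2 * r^2) * ((2:ℝ≥0∞)⁻¹)^k * V := by
    intro k
    have hb : ∀ x ∈ shell k, (ENNReal.ofReal ‖x - y‖)⁻¹ ≤ (ENNReal.ofReal (r / 2^(k+1)))⁻¹ := by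
      intro x hx
      have : r / 2^(k+1) ≤ ‖x - y‖ := by
        have := hx.2
        simp only [mem_ball, not_lt] at this
        rwa [← dist_eq_norm]
      exact ENNReal.inv_le_inv.2 (ENNReal.ofReal_le_ofReal this)
    calc ∫⁻ x in shell k, (ENNReal.ofReal ‖x - y‖)⁻¹
        ≤ ∫⁻ _x in shell k, (ENNReal.ofReal (r / 2^(k+1)))⁻¹ := setLIntegral_mono measurable_const hb
      _ = (ENNReal.ofReal (r / 2^(k+1)))⁻¹ * volume (shell k) := by rw [setLIntegral_const]
      _ ≤ (ENNReal.ofReal (r / 2^(k+1)))⁻¹ * (ENNReal.ofReal ((r/2^k) ^ 3) * V) := by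
          gcongr
          rw [← vol_ball y (by positivity : (0:ℝ) ≤ r/2^k)]
          exact measure_mono diff_subset
      _ = ENNReal.ofReal ((r/2^k) ^ 3 / (r / 2^(k+1))) * V := key _ _ (by positivity)
      _ ≤ ENNReal.ofReal (2 * r^2) * ((2:ℝ≥0∞)⁻¹)^k * V := by
          have heq : (r/2^k) ^ 3 / (r / 2^(k+1)) = 2 * r^2 * (1/4)^k := by
            have h4 : (4:ℝ)^k = (2^k)^2 := by
              rw [show (4:ℝ) = 2^2 by norm_num, pow_right_comm]
            field_simp
            rw [one_div, inv_pow, h4, pow_succ]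
            field_simp <;> ring
          have h14 : 2 * r^2 * ((1/4:ℝ))^k ≤ 2 * r^2 * (1/2)^k := by
            have := pow_le_pow_left₀ (by norm_num : (0:ℝ) ≤ 1/4) (by norm_num : (1/4:ℝ) ≤ 1/2) k
            nlinarith [sq_nonneg r, pow_nonneg (by norm_num : (0:ℝ) ≤ 1/4) k]
          rw [heq]
          gcongr ?_ * V
          calc ENNReal.ofReal (2 * r^2 * (1/4)^k) ≤ ENNReal.ofReal (2 * r^2 * (1/2)^k) :=
                ENNReal.ofReal_le_ofReal h14
            _ = ENNReal.ofReal (2 * r^2) * ((2:ℝ≥0∞)⁻¹)^k := by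
                rw [ENNReal.ofReal_mul (by positivity), ENNReal.ofReal_pow (by norm_num),
                  half_ofReal]
  calc ∫⁻ x in Metric.ball y r, (ENNReal.ofReal ‖x - y‖)⁻¹
      ≤ ∫⁻ x in {y} ∪ ⋃ k, shell k, (ENNReal.ofReal ‖x - y‖)⁻¹ := lintegral_mono_set cover
    _ ≤ (∫⁻ x in ({y} : Set E3), (ENNReal.ofReal ‖x - y‖)⁻¹)
        + ∫⁻ x in ⋃ k, shell k, (ENNReal.ofReal ‖x - y‖)⁻¹ := lintegral_union_le _ _ _
    _ = ∫⁻ x in ⋃ k, shell k, (ENNReal.ofReal ‖x - y‖)⁻¹ := by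
        rw [setLIntegral_measure_zero _ _ (measure_singleton y), zero_add]
    _ ≤ ∑' k, ∫⁻ x in shell k, (ENNReal.ofReal ‖x - y‖)⁻¹ := lintegral_iUnion_le _ _
    _ ≤ ∑' k : ℕ, ENNReal.ofReal (2 * r^2) * ((2:ℝ≥0∞)⁻¹)^k * V := ENNReal.tsum_le_tsum shell_bound
    _ = ENNReal.ofReal (2 * r^2) * V * ∑' k : ℕ, ((2:ℝ≥0∞)⁻¹)^k := by
        rw [← ENNReal.tsum_mul_left]
        congr 1
        ext k
        ring
    _ = ENNReal.ofReal (r^2) * (4 * V) := by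
        rw [ENNReal.tsum_geometric, ENNReal.one_sub_inv_two, inv_inv,
          ENNReal.ofReal_mul (by norm_num), ENNReal.ofReal_ofNat]
        ring

end HLSaux

namespace HLSaux2
open HLSaux

def C1 : ℝ≥0∞ := 4 * V + 1

lemma C1_ne_zero : C1 ≠ 0 := by simp [C1]
lemma C1_ne_top : C1 ≠ ⊤ := by
  have := V_lt_top
  simp only [C1]
  finiteness

lemma ofReal_toReal_rpow {m : ℝ≥0∞} (hm : m ≠ ⊤) {z : ℝ} (hz : 0 ≤ z) :
    ENNReal.ofReal (m.toReal ^ z) = m ^ z := by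
  rw [ENNReal.toReal_rpow, ENNReal.ofReal_toReal (ENNReal.rpow_ne_top_of_nonneg hz hm)]

lemma set_integral_kernel (S : Set E3) (y : E3) :
    ∫⁻ x in S, (ENNReal.ofReal ‖x - y‖)⁻¹ ≤ C1 * (volume S) ^ ((2:ℝ)/3) := by
  rcases eq_or_ne (volume S) 0 with hm0 | hm0
  · rw [setLIntegral_measure_zero _ _ hm0]
    exact zero_le
  rcases eq_or_ne (volume S) ⊤ with hmtop | hmtop
  · rw [hmtop, ENNReal.top_rpow_of_pos (by norm_num), ENNReal.mul_top C1_ne_zero]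
    exact le_top
  set m := volume S with hm
  set r : ℝ := m.toReal ^ ((1:ℝ)/3) with hrdef
  have hmr : 0 < m.toReal := ENNReal.toReal_pos hm0 hmtop
  have hr : 0 < r := Real.rpow_pos_of_pos hmr _
  have hofr : ENNReal.ofReal r = m ^ ((1:ℝ)/3) := ofReal_toReal_rpow hmtop (by norm_num)
  have hsplit : S ⊆ (S ∩ Metric.ball y r) ∪ (S \ Metric.ball y r) := by
    intro x hx
    by_cases h : x ∈ Metric.ball y r
    · exact Or.inl ⟨hx, h⟩
    · exact Or.inr ⟨hx, h⟩
  calc ∫⁻ x in S, (ENNReal.ofReal ‖x - y‖)⁻¹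
      ≤ ∫⁻ x in (S ∩ Metric.ball y r) ∪ (S \ Metric.ball y r), (ENNReal.ofReal ‖x - y‖)⁻¹ :=
        lintegral_mono_set hsplit
    _ ≤ (∫⁻ x in S ∩ Metric.ball y r, (ENNReal.ofReal ‖x - y‖)⁻¹)
        + ∫⁻ x in S \ Metric.ball y r, (ENNReal.ofReal ‖x - y‖)⁻¹ := lintegral_union_le _ _ _
    _ ≤ ENNReal.ofReal (r^2) * (4 * V) + (ENNReal.ofReal r)⁻¹ * m := by
        gcongr
        · exact le_trans (lintegral_mono_set inter_subset_right) (ball_integral y hr.le)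
        · calc ∫⁻ x in S \ Metric.ball y r, (ENNReal.ofReal ‖x - y‖)⁻¹
              ≤ ∫⁻ _x in S \ Metric.ball y r, (ENNReal.ofReal r)⁻¹ := by
                refine setLIntegral_mono measurable_const ?_
                intro x hx
                refine ENNReal.inv_le_inv.2 (ENNReal.ofReal_le_ofReal ?_)
                have := hx.2
                simp only [mem_ball, not_lt] at this
                rwa [← dist_eq_norm]
            _ = (ENNReal.ofReal r)⁻¹ * volume (S \ Metric.ball y r) := setLIntegral_const _ _
            _ ≤ (ENNReal.ofReal r)⁻¹ * m := by
                gcongr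
                exact measure_mono diff_subset
    _ ≤ m ^ ((2:ℝ)/3) * (4 * V) + m ^ ((2:ℝ)/3) := by
        gcongr
        · have : r ^ 2 = m.toReal ^ ((2:ℝ)/3) := by
            rw [hrdef, ← Real.rpow_natCast (m.toReal ^ ((1:ℝ)/3)) 2, ← Real.rpow_mul hmr.le]
            norm_num
          rw [this, ofReal_toReal_rpow hmtop (by norm_num)]
        · rw [hofr, ← ENNReal.rpow_neg_one (m ^ ((1:ℝ)/3)), ← ENNReal.rpow_mul]
          nth_rewrite 2 [show m = m ^ (1:ℝ) by rw [ENNReal.rpow_one]]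
          rw [← ENNReal.rpow_add _ _ hm0 hmtop]
          norm_num
    _ = C1 * m ^ ((2:ℝ)/3) := by rw [C1]; ring

lemma pair_direct (A B : Set E3) :
    ∫⁻ x in A, ∫⁻ y in B, (ENNReal.ofReal ‖x - y‖)⁻¹
      ≤ C1 * volume A * (volume B) ^ ((2:ℝ)/3) := by
  calc ∫⁻ x in A, ∫⁻ y in B, (ENNReal.ofReal ‖x - y‖)⁻¹
      ≤ ∫⁻ _x in A, C1 * (volume B) ^ ((2:ℝ)/3) := by
        refine setLIntegral_mono measurable_const ?_
        intro x _
        have : ∀ y, (ENNReal.ofReal ‖x - y‖) = (ENNReal.ofReal ‖y - x‖) := fun y => by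
          rw [norm_sub_rev]
        simp_rw [this]
        exact set_integral_kernel B x
    _ = C1 * (volume B) ^ ((2:ℝ)/3) * volume A := setLIntegral_const _ _
    _ = C1 * volume A * (volume B) ^ ((2:ℝ)/3) := by ring

lemma meas_kernel : Measurable (fun p : E3 × E3 => (ENNReal.ofReal ‖p.1 - p.2‖)⁻¹) := by
  apply Measurable.inv
  apply ENNReal.measurable_ofReal.comp
  exact (continuous_fst.sub continuous_snd).norm.measurable

lemma pair_swap (A B : Set E3) :
    ∫⁻ x in A, ∫⁻ y in B, (ENNReal.ofReal ‖x - y‖)⁻¹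
      ≤ C1 * (volume A) ^ ((2:ℝ)/3) * volume B := by
  rw [lintegral_lintegral_swap (meas_kernel.aemeasurable)]
  calc ∫⁻ y in B, ∫⁻ x in A, (ENNReal.ofReal ‖x - y‖)⁻¹
      ≤ ∫⁻ _y in B, C1 * (volume A) ^ ((2:ℝ)/3) := by
        refine setLIntegral_mono measurable_const ?_
        intro y _
        exact set_integral_kernel A y
    _ = C1 * (volume A) ^ ((2:ℝ)/3) * volume B := setLIntegral_const _ _

end HLSaux2

namespace HLSaux3
open HLSaux HLSaux2

lemma two_rpow_ne_top (s : ℝ) : (2:ℝ≥0∞)^s ≠ ⊤ := by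
  rcases le_or_gt 0 s with h | h
  · exact ENNReal.rpow_ne_top_of_nonneg h (by norm_num)
  · rw [show s = -(-s) by ring, ENNReal.rpow_neg]
    exact ENNReal.inv_ne_top.2 (ENNReal.rpow_pos (by norm_num) (by norm_num)).ne'

lemma two_rpow_ne_zero (s : ℝ) : (2:ℝ≥0∞)^s ≠ 0 :=
  (ENNReal.rpow_pos (by norm_num) (by norm_num)).ne'

lemma two_rpow_add (s t : ℝ) : (2:ℝ≥0∞)^(s+t) = 2^s * 2^t :=
  ENNReal.rpow_add _ _ (by norm_num) (by norm_num)

def gsum : ℝ≥0∞ := ∑' k : ℕ, ((2:ℝ≥0∞)^(-(1:ℝ)/5))^k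

lemma gsum_ne_top : gsum ≠ ⊤ := by
  rw [gsum, ENNReal.tsum_geometric]
  refine ENNReal.inv_ne_top.2 ?_
  have h1 : (2:ℝ≥0∞)^(-(1:ℝ)/5) < 1 :=
    ENNReal.rpow_lt_one_of_one_lt_of_neg (by norm_num) (by norm_num)
  exact (tsub_pos_of_lt h1).ne'

lemma gsum_ne_zero : gsum ≠ 0 := by
  rw [gsum]
  intro h
  have := ENNReal.le_tsum (f := fun k : ℕ => ((2:ℝ≥0∞)^(-(1:ℝ)/5))^k) 0
  rw [h] at this
  simp at this

lemma geo (j : ℤ) :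
    ∑' i : ℤ, (if i ≤ j then (2:ℝ≥0∞)^(((i:ℝ)-(j:ℝ))/5) else 0) = gsum := by
  have hinj : Function.Injective (fun k : ℕ => j - (k:ℤ)) := by
    intro k l h
    simp only [sub_right_inj, Nat.cast_inj] at h
    omega
  rw [← Function.Injective.tsum_eq hinj ?hsupp]
  · rw [gsum]
    refine tsum_congr fun k => ?_
    rw [if_pos (by omega : j - (k:ℤ) ≤ j)]
    rw [← ENNReal.rpow_natCast ((2:ℝ≥0∞)^(-(1:ℝ)/5)) k, ← ENNReal.rpow_mul]
    congr 1
    push_cast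
    ring
  case hsupp =>
    intro x hx
    by_cases hxj : x ≤ j
    · refine ⟨(j - x).toNat, ?_⟩
      simp only
      omega
    · exfalso
      apply hx
      simp [hxj]

lemma ind_mul {E : Set E3} (hE : MeasurableSet E) {cc : ℝ≥0∞} (hcc : cc ≠ ⊤) (h : E3 → ℝ≥0∞) :
    ∫⁻ x, (E.indicator (fun _ => cc) x) * h x = cc * ∫⁻ x in E, h x := by
  have heq : (fun x => (E.indicator (fun _ => cc) x) * h x) = E.indicator (fun x => cc * h x) := by
    funext x
    by_cases hx : x ∈ E <;> simp [hx]
  rw [heq, lintegral_indicator hE, lintegral_const_mul' _ _ hcc]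

lemma arith {Amax ai aj : ℝ≥0∞} (i j : ℝ) {mi mj : ℝ≥0∞}
    (hmi : mi = (2:ℝ≥0∞)^(-(6/5*i)) * ai) (hmj : mj = (2:ℝ≥0∞)^(-(6/5*j)) * aj)
    (hA : ai ≤ Amax) :
    (2:ℝ≥0∞)^(i+1) * (2:ℝ≥0∞)^(j+1) * (C1 * mi^((2:ℝ)/3) * mj)
      ≤ (4 * C1 * Amax^((2:ℝ)/3)) * ((2:ℝ≥0∞)^((i-j)/5) * aj) := by
  subst hmi hmj
  have hsplit : ((2:ℝ≥0∞)^(-(6/5*i)) * ai)^((2:ℝ)/3)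
      = (2:ℝ≥0∞)^(-(6/5*i)*(2/3)) * ai^((2:ℝ)/3) := by
    rw [ENNReal.mul_rpow_of_nonneg _ _ (by norm_num : (0:ℝ) ≤ 2/3), ← ENNReal.rpow_mul]
  have hpow : (2:ℝ≥0∞)^(i+1) * 2^(j+1) * 2^(-(6/5*i)*(2/3)) * 2^(-(6/5*j))
      = 2^(2:ℝ) * 2^((i-j)/5) := by
    rw [← two_rpow_add, ← two_rpow_add, ← two_rpow_add, ← two_rpow_add]
    congr 1
    ring
  have h4 : (2:ℝ≥0∞)^(2:ℝ) = 4 := by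
    rw [show (2:ℝ) = ((2:ℕ):ℝ) by norm_num, ENNReal.rpow_natCast]
    norm_num
  calc (2:ℝ≥0∞)^(i+1) * (2:ℝ≥0∞)^(j+1)
        * (C1 * ((2:ℝ≥0∞)^(-(6/5*i)) * ai)^((2:ℝ)/3) * ((2:ℝ≥0∞)^(-(6/5*j)) * aj))
      = ((2:ℝ≥0∞)^(i+1) * 2^(j+1) * 2^(-(6/5*i)*(2/3)) * 2^(-(6/5*j)))
        * (C1 * ai^((2:ℝ)/3) * aj) := by rw [hsplit]; ring
    _ = (2^(2:ℝ) * 2^((i-j)/5)) * (C1 * ai^((2:ℝ)/3) * aj) := by rw [hpow]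
    _ ≤ (2^(2:ℝ) * 2^((i-j)/5)) * (C1 * Amax^((2:ℝ)/3) * aj) := by
        gcongr
    _ = (4 * C1 * Amax^((2:ℝ)/3)) * ((2:ℝ≥0∞)^((i-j)/5) * aj) := by rw [h4]; ring

end HLSaux3

namespace HLScore
open HLSaux HLSaux2 HLSaux3 Set

set_option maxHeartbeats 1000000 in
lemma core {g : E3 → ℝ} (hg : Measurable g) :
    ∫⁻ x, ∫⁻ y, ENNReal.ofReal (|g x| * |g y| / ‖x - y‖)
      ≤ (8 * C1 * gsum) * (∫⁻ x, (ENNReal.ofReal |g x|) ^ ((6:ℝ)/5)) ^ ((5:ℝ)/3) := by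
  set F : E3 → ℝ≥0∞ := fun x => ENNReal.ofReal |g x| with hF
  set I := ∫⁻ x, (F x) ^ ((6:ℝ)/5) with hI
  set E : ℤ → Set E3 := fun i => {x | (2:ℝ)^i ≤ |g x| ∧ |g x| < 2^(i+1)} with hE
  have hEmeas : ∀ i, MeasurableSet (E i) := fun i =>
    (measurableSet_le measurable_const hg.abs).inter (measurableSet_lt hg.abs measurable_const)
  have hEkey : ∀ i j : ℤ, i < j → Disjoint (E i) (E j) := by
    intro i j h
    refine Set.disjoint_left.2 ?_
    intro x hxi hxj
    have h1 : |g x| < 2^(i+1) := hxi.2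
    have h2 : (2:ℝ)^j ≤ |g x| := hxj.1
    have h3 : (2:ℝ)^(i+1) ≤ 2^j := zpow_le_zpow_right₀ (by norm_num) (by omega)
    linarith
  have hEdisj : Pairwise (Function.onFun Disjoint E) := by
    intro i j hij
    rcases lt_or_gt_of_ne hij with h | h
    · exact hEkey i j h
    · exact (hEkey j i h).symm
  set c : ℤ → ℝ≥0∞ := fun i => (2:ℝ≥0∞)^((i:ℝ)+1) with hc
  set u : ℤ → E3 → ℝ≥0∞ := fun i => (E i).indicator (fun _ => c i) with hu
  have hc_ne_top : ∀ i, c i ≠ ⊤ := fun i => two_rpow_ne_top _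
  have humeas : ∀ i, Measurable (u i) := fun i => measurable_const.indicator (hEmeas i)
  have hu_ne_top : ∀ i x, u i x ≠ ⊤ := by
    intro i x
    by_cases hx : x ∈ E i <;> simp [hu, hx, hc_ne_top i]
  -- pointwise domination of F by the layered sum
  have hpt : ∀ x : E3, F x ≤ ∑' i, u i x := by
    intro x
    rcases eq_or_lt_of_le (abs_nonneg (g x)) with h0 | h0
    · rw [hF]
      simp only [← h0, ENNReal.ofReal_zero]
      exact zero_le
    obtain ⟨i, hi1, hi2⟩ := exists_mem_Ico_zpow h0 (by norm_num : (1:ℝ) < 2)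
    have hmem : x ∈ E i := ⟨hi1, hi2⟩
    have hle : F x ≤ u i x := by
      rw [hu]
      simp only [indicator_of_mem hmem]
      calc F x ≤ ENNReal.ofReal ((2:ℝ)^(i+1)) := ENNReal.ofReal_le_ofReal hi2.le
        _ = c i := by
            rw [← Real.rpow_intCast 2 (i+1), ← ENNReal.ofReal_rpow_of_pos (by norm_num)]
            rw [show ENNReal.ofReal 2 = 2 by norm_num, hc]
            simp only
            congr 1
            push_cast
            ring
    exact hle.trans (ENNReal.le_tsum i)
  set m : ℤ → ℝ≥0∞ := fun i => volume (E i) with hm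
  set a : ℤ → ℝ≥0∞ := fun i => (2:ℝ≥0∞)^((6/5)*(i:ℝ)) * m i with ha
  set A := ∑' i, a i with hA
  have hmi : ∀ i, m i = (2:ℝ≥0∞)^(-((6/5)*(i:ℝ))) * a i := by
    intro i
    rw [ha]
    simp only
    rw [← mul_assoc, ← two_rpow_add,
      show -(6/5*(i:ℝ)) + 6/5*(i:ℝ) = 0 by ring, ENNReal.rpow_zero, one_mul]
  have haA : ∀ i, a i ≤ A := fun i => ENNReal.le_tsum i
  have hFmeas : Measurable F := ENNReal.measurable_ofReal.comp hg.abs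
  have hF65 : Measurable fun x => (F x) ^ ((6:ℝ)/5) := hFmeas.pow_const _
  have hAI : A ≤ I := by
    calc A = ∑' i : ℤ, (2:ℝ≥0∞)^((6/5)*(i:ℝ)) * m i := by rw [hA]
      _ ≤ ∑' i : ℤ, ∫⁻ x in E i, (F x)^((6:ℝ)/5) := by
          refine ENNReal.tsum_le_tsum fun i => ?_
          have : (2:ℝ≥0∞)^((6/5)*(i:ℝ)) * m i = ∫⁻ _x in E i, (2:ℝ≥0∞)^((6/5)*(i:ℝ)) := by
            rw [setLIntegral_const]
          rw [this]
          refine setLIntegral_mono hF65 ?_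
          intro x hx
          have h1 : ENNReal.ofReal ((2:ℝ)^i) ≤ F x := ENNReal.ofReal_le_ofReal hx.1
          calc (2:ℝ≥0∞)^((6/5)*(i:ℝ)) = (ENNReal.ofReal ((2:ℝ)^i))^((6:ℝ)/5) := by
                rw [← Real.rpow_intCast 2 i, ← ENNReal.ofReal_rpow_of_pos (by norm_num)]
                rw [show ENNReal.ofReal 2 = 2 by norm_num, ← ENNReal.rpow_mul]
                congr 1
                ring
            _ ≤ (F x)^((6:ℝ)/5) := ENNReal.rpow_le_rpow h1 (by norm_num)
      _ = ∫⁻ x in ⋃ i, E i, (F x)^((6:ℝ)/5) := (lintegral_iUnion hEmeas hEdisj _).symm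
      _ ≤ I := by rw [hI]; exact setLIntegral_le_lintegral _ _
  set kern : E3 → E3 → ℝ≥0∞ := fun x y => (ENNReal.ofReal ‖x - y‖)⁻¹ with hkern
  have hk1 : ∀ x, Measurable (kern x) := by
    intro x
    apply Measurable.inv
    apply ENNReal.measurable_ofReal.comp
    exact (continuous_const.sub continuous_id).norm.measurable
  -- pointwise bound
  have hptwise : ∀ x y, ENNReal.ofReal (|g x| * |g y| / ‖x - y‖)
      ≤ (∑' i, u i x) * (∑' j, u j y) * kern x y := by
    intro x y
    rcases eq_or_lt_of_le (norm_nonneg (x - y)) with hc0 | hc0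
    · rw [← hc0]
      simp
    have step : ENNReal.ofReal (|g x| * |g y| / ‖x - y‖) = F x * F y * kern x y := by
      rw [ENNReal.ofReal_div_of_pos hc0, ENNReal.ofReal_mul (abs_nonneg _), div_eq_mul_inv]
    rw [step]
    exact mul_le_mul' (mul_le_mul' (hpt x) (hpt y)) le_rfl
  have hexpand : ∀ x y, (∑' i, u i x) * (∑' j, u j y) * kern x y
      = ∑' p : ℤ×ℤ, u p.1 x * u p.2 y * kern x y := by
    intro x y
    rw [ENNReal.tsum_prod']
    rw [mul_assoc, ← ENNReal.tsum_mul_right]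
    refine tsum_congr fun i => ?_
    rw [← ENNReal.tsum_mul_right, ← ENNReal.tsum_mul_left]
    refine tsum_congr fun j => ?_
    ring
  have hinner : ∀ (i j : ℤ) (x : E3), ∫⁻ y, u i x * u j y * kern x y
      = u i x * (c j * ∫⁻ y in E j, kern x y) := by
    intro i j x
    rw [show (fun y => u i x * u j y * kern x y) = fun y => u i x * (u j y * kern x y) from
      funext fun y => by ring]
    rw [lintegral_const_mul' _ _ (hu_ne_top i x)]
    congr 1
    exact ind_mul (hEmeas j) (hc_ne_top j) _
  have houtmeas : ∀ p : ℤ×ℤ, Measurable fun x => u p.1 x * (c p.2 * ∫⁻ y in E p.2, kern x y) := by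
    intro p
    refine (humeas p.1).mul (measurable_const.mul ?_)
    have hm : Measurable (Function.uncurry fun x y : E3 => kern x y) := meas_kernel
    exact hm.lintegral_prod_right'
  calc ∫⁻ x, ∫⁻ y, ENNReal.ofReal (|g x| * |g y| / ‖x - y‖)
      ≤ ∫⁻ x, ∫⁻ y, ∑' p : ℤ×ℤ, u p.1 x * u p.2 y * kern x y :=
        lintegral_mono fun x => lintegral_mono fun y => (hptwise x y).trans_eq (hexpand x y)
    _ = ∫⁻ x, ∑' p : ℤ×ℤ, u p.1 x * (c p.2 * ∫⁻ y in E p.2, kern x y) := by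
        refine lintegral_congr fun x => ?_
        rw [lintegral_tsum (f := fun p : ℤ×ℤ => fun y => u p.1 x * u p.2 y * kern x y) fun p : ℤ×ℤ =>
          (((measurable_const.mul (humeas p.2)).mul (hk1 x)).aemeasurable :
            AEMeasurable (fun y => u p.1 x * u p.2 y * kern x y) volume)]
        exact tsum_congr fun p => hinner p.1 p.2 x
    _ = ∑' p : ℤ×ℤ, ∫⁻ x, u p.1 x * (c p.2 * ∫⁻ y in E p.2, kern x y) :=
        lintegral_tsum fun p => (houtmeas p).aemeasurable
    _ = ∑' p : ℤ×ℤ, c p.1 * c p.2 * ∫⁻ x in E p.1, ∫⁻ y in E p.2, kern x y := by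
        refine tsum_congr fun p => ?_
        rw [show (fun x => u p.1 x * (c p.2 * ∫⁻ y in E p.2, kern x y))
            = fun x => c p.2 * (u p.1 x * ∫⁻ y in E p.2, kern x y) from funext fun x => by ring]
        rw [lintegral_const_mul' _ _ (hc_ne_top p.2), ind_mul (hEmeas p.1) (hc_ne_top p.1)]
        ring
    _ ≤ ∑' p : ℤ×ℤ, (4 * C1 * A^((2:ℝ)/3)) *
          (if p.1 ≤ p.2 then (2:ℝ≥0∞)^(((p.1:ℝ)-(p.2:ℝ))/5) * a p.2
           else (2:ℝ≥0∞)^(((p.2:ℝ)-(p.1:ℝ))/5) * a p.1) := by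
        refine ENNReal.tsum_le_tsum ?_
        rintro ⟨i, j⟩
        by_cases hij : i ≤ j
        · simp only [if_pos hij]
          calc c i * c j * ∫⁻ x in E i, ∫⁻ y in E j, kern x y
              ≤ c i * c j * (C1 * (m i)^((2:ℝ)/3) * m j) := by
                gcongr
                exact pair_swap (E i) (E j)
            _ ≤ (4 * C1 * A^((2:ℝ)/3)) * ((2:ℝ≥0∞)^(((i:ℝ)-(j:ℝ))/5) * a j) :=
                arith (i:ℝ) (j:ℝ) (hmi i) (hmi j) (haA i)
        · simp only [if_neg hij]
          calc c i * c j * ∫⁻ x in E i, ∫⁻ y in E j, kern x y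
              ≤ c i * c j * (C1 * m i * (m j)^((2:ℝ)/3)) := by
                gcongr
                exact pair_direct (E i) (E j)
            _ = c j * c i * (C1 * (m j)^((2:ℝ)/3) * m i) := by ring
            _ ≤ (4 * C1 * A^((2:ℝ)/3)) * ((2:ℝ≥0∞)^(((j:ℝ)-(i:ℝ))/5) * a i) :=
                arith (j:ℝ) (i:ℝ) (hmi j) (hmi i) (haA j)
    _ = (4 * C1 * A^((2:ℝ)/3)) * ∑' p : ℤ×ℤ,
          (if p.1 ≤ p.2 then (2:ℝ≥0∞)^(((p.1:ℝ)-(p.2:ℝ))/5) * a p.2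
           else (2:ℝ≥0∞)^(((p.2:ℝ)-(p.1:ℝ))/5) * a p.1) := ENNReal.tsum_mul_left
    _ ≤ (4 * C1 * A^((2:ℝ)/3)) * (2 * gsum * A) := by
        gcongr
        -- sum of the selector function is at most 2 * gsum * A
        calc ∑' p : ℤ×ℤ, (if p.1 ≤ p.2 then (2:ℝ≥0∞)^(((p.1:ℝ)-(p.2:ℝ))/5) * a p.2
               else (2:ℝ≥0∞)^(((p.2:ℝ)-(p.1:ℝ))/5) * a p.1)
            ≤ ∑' p : ℤ×ℤ, ((if p.1 ≤ p.2 then (2:ℝ≥0∞)^(((p.1:ℝ)-(p.2:ℝ))/5) else 0) * a p.2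
              + (if p.2 ≤ p.1 then (2:ℝ≥0∞)^(((p.2:ℝ)-(p.1:ℝ))/5) else 0) * a p.1) := by
              refine ENNReal.tsum_le_tsum ?_
              rintro ⟨i, j⟩
              by_cases hij : i ≤ j
              · simp only [if_pos hij]
                exact le_add_right le_rfl
              · simp only [if_neg hij, if_pos (le_of_not_ge hij)]
                exact le_add_left le_rfl
          _ = (∑' p : ℤ×ℤ, (if p.1 ≤ p.2 then (2:ℝ≥0∞)^(((p.1:ℝ)-(p.2:ℝ))/5) else 0) * a p.2)
              + ∑' p : ℤ×ℤ, (if p.2 ≤ p.1 then (2:ℝ≥0∞)^(((p.2:ℝ)-(p.1:ℝ))/5) else 0) * a p.1 :=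
              ENNReal.tsum_add
          _ = gsum * A + gsum * A := by
              congr 1
              · rw [ENNReal.tsum_prod', ENNReal.tsum_comm]
                calc ∑' (j:ℤ), ∑' (i:ℤ), (if i ≤ j then (2:ℝ≥0∞)^(((i:ℝ)-(j:ℝ))/5) else 0) * a j
                    = ∑' (j:ℤ), gsum * a j := by
                      refine tsum_congr fun j => ?_
                      rw [ENNReal.tsum_mul_right, geo j]
                  _ = gsum * A := ENNReal.tsum_mul_left
              · rw [ENNReal.tsum_prod']
                calc ∑' (i:ℤ), ∑' (j:ℤ), (if j ≤ i then (2:ℝ≥0∞)^(((j:ℝ)-(i:ℝ))/5) else 0) * a i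
                    = ∑' (i:ℤ), gsum * a i := by
                      refine tsum_congr fun i => ?_
                      rw [ENNReal.tsum_mul_right, geo i]
                  _ = gsum * A := ENNReal.tsum_mul_left
          _ = 2 * gsum * A := by ring
    _ ≤ (8 * C1 * gsum) * I ^ ((5:ℝ)/3) := by
        have hfinal : A^((2:ℝ)/3) * A ≤ I^((5:ℝ)/3) := by
          rcases eq_or_ne I 0 with hI0 | hI0
          · have hA0 : A = 0 := le_antisymm (hAI.trans_eq hI0) zero_le
            rw [hA0, ENNReal.zero_rpow_of_pos (by norm_num), mul_zero]
            exact zero_le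
          rcases eq_or_ne I ⊤ with hItop | hItop
          · rw [hItop, ENNReal.top_rpow_of_pos (by norm_num)]
            exact le_top
          calc A^((2:ℝ)/3) * A ≤ I^((2:ℝ)/3) * I := by gcongr
            _ = I^((5:ℝ)/3) := by
                nth_rewrite 2 [← ENNReal.rpow_one I]
                rw [← ENNReal.rpow_add _ _ hI0 hItop]
                norm_num
        calc (4 * C1 * A^((2:ℝ)/3)) * (2 * gsum * A)
            = (8 * C1 * gsum) * (A^((2:ℝ)/3) * A) := by ring
          _ ≤ (8 * C1 * gsum) * I^((5:ℝ)/3) := by gcongr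

end HLScore

end AuxHLS

open HLSaux HLSaux2 HLSaux3

/-- Hardy–Littlewood–Sobolev for the Coulomb kernel: if `ρ ∈ L^{6/5}(ℝ³)` then the Coulomb
self-energy `(1/2)∫∫ |ρ(x)||ρ(y)|/|x−y| dx dy` is finite and bounded by a universal constant
times `‖ρ‖_{6/5}²`. -/
theorem coulomb_selfEnergy_le_HLS :
    ∃ C : ℝ, 0 < C ∧ ∀ ρ : E3 → ℝ, MemLp ρ (ENNReal.ofReal (6/5)) →
      (1/2) * ∫⁻ x : E3, ∫⁻ y : E3, ENNReal.ofReal (|ρ x| * |ρ y| / ‖x - y‖)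
        ≤ ENNReal.ofReal C * (eLpNorm ρ (ENNReal.ofReal (6/5)) volume) ^ 2 := by
  refine ⟨(8 * C1 * gsum).toReal + 1, by positivity, ?_⟩
  intro ρ hρ
  have hsm := hρ.1
  set g := hsm.mk ρ with hgdef
  have hgsm : StronglyMeasurable g := hsm.stronglyMeasurable_mk
  have hae : ρ =ᵐ[volume] g := hsm.ae_eq_mk
  have hLHS : ∫⁻ x : E3, ∫⁻ y : E3, ENNReal.ofReal (|ρ x| * |ρ y| / ‖x - y‖)
      = ∫⁻ x : E3, ∫⁻ y : E3, ENNReal.ofReal (|g x| * |g y| / ‖x - y‖) := by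
    apply lintegral_congr_ae
    filter_upwards [hae] with x hx
    apply lintegral_congr_ae
    filter_upwards [hae] with y hy
    rw [hx, hy]
  have hNeq : eLpNorm ρ (ENNReal.ofReal (6/5)) volume
      = eLpNorm g (ENNReal.ofReal (6/5)) volume := eLpNorm_congr_ae hae
  set I := ∫⁻ x, (ENNReal.ofReal |g x|) ^ ((6:ℝ)/5) with hIdef
  have hp0 : (ENNReal.ofReal (6/5) : ℝ≥0∞) ≠ 0 := by
    rw [Ne, ENNReal.ofReal_eq_zero]
    norm_num
  have hptop : (ENNReal.ofReal (6/5) : ℝ≥0∞) ≠ ⊤ := ENNReal.ofReal_ne_top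
  have hptR : (ENNReal.ofReal (6/5) : ℝ≥0∞).toReal = 6/5 := ENNReal.toReal_ofReal (by norm_num)
  have hNg : eLpNorm g (ENNReal.ofReal (6/5)) volume = I ^ ((5:ℝ)/6) := by
    rw [eLpNorm_eq_lintegral_rpow_enorm_toReal hp0 hptop, hptR]
    congr 1
    · refine lintegral_congr fun x => ?_
      congr 1
      rw [← ofReal_norm, Real.norm_eq_abs]
    · norm_num
  have hsq : (eLpNorm g (ENNReal.ofReal (6/5)) volume)^2 = I ^ ((5:ℝ)/3) := by
    rw [hNg, ← ENNReal.rpow_natCast (I ^ ((5:ℝ)/6)) 2, ← ENNReal.rpow_mul]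
    norm_num
  have hne : (8*C1*gsum : ℝ≥0∞) ≠ ⊤ :=
    ENNReal.mul_ne_top (ENNReal.mul_ne_top (by norm_num) C1_ne_top) gsum_ne_top
  calc (1/2) * ∫⁻ x : E3, ∫⁻ y : E3, ENNReal.ofReal (|ρ x| * |ρ y| / ‖x - y‖)
      ≤ 1 * ∫⁻ x : E3, ∫⁻ y : E3, ENNReal.ofReal (|ρ x| * |ρ y| / ‖x - y‖) := by
        gcongr
        rw [one_div]
        exact ENNReal.inv_le_one.2 one_le_two
    _ = ∫⁻ x : E3, ∫⁻ y : E3, ENNReal.ofReal (|g x| * |g y| / ‖x - y‖) := by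
        rw [one_mul, hLHS]
    _ ≤ (8 * C1 * gsum) * I ^ ((5:ℝ)/3) := HLScore.core hgsm.measurable
    _ = (8 * C1 * gsum) * (eLpNorm ρ (ENNReal.ofReal (6/5)) volume) ^ 2 := by
        rw [hNeq, hsq]
    _ ≤ ENNReal.ofReal ((8*C1*gsum).toReal + 1)
        * (eLpNorm ρ (ENNReal.ofReal (6/5)) volume) ^ 2 := by
        gcongr
        calc (8*C1*gsum : ℝ≥0∞) = ENNReal.ofReal ((8*C1*gsum).toReal) :=
              (ENNReal.ofReal_toReal hne).symm
          _ ≤ ENNReal.ofReal ((8*C1*gsum).toReal + 1) := ENNReal.ofReal_le_ofReal (by linarith)
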